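/- Let a = (a_1,…,a_n) be a vector of nonnegative integers with a_1 > 0. Then the Tesler polytope Tes_n(a) has at most n! extreme points (vertices). Moreover, Tes_n(a) has exactly n! extreme points if and only if a_2, a_3, …, a_{n−1} are all positive. -/

import Mathlib

open Finset

/-- The Tesler polytope `Tes_n(a)`: upper triangular `n × n` matrices with nonnegative
real entries whose `k`-th hook sum equals `a k`.  Entries strictly below the diagonal
are required to be `0`. -/
def TeslerPolytope (n : ℕ) (a : Fin n → ℕ) : Set (Fin n → Fin n → ℝ) :=
  {x | (∀ i j : Fin n, j < i → x i j = 0) ∧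
       (∀ i j : Fin n, i ≤ j → 0 ≤ x i j) ∧
       (∀ k : Fin n,
         (∑ j ∈ univ.filter (fun j => k ≤ j), x k j)
           - (∑ i ∈ univ.filter (fun i => i < k), x i k) = (a k : ℝ))}

namespace TesAux

variable {n : ℕ}

/-- The `k`-th hook sum of a matrix. -/
def hook (x : Fin n → Fin n → ℝ) (k : Fin n) : ℝ :=
  (∑ j ∈ univ.filter (fun j => k ≤ j), x k j)
    - (∑ i ∈ univ.filter (fun i => i < k), x i k)

lemma mem_tesler_iff {a : Fin n → ℕ} {x : Fin n → Fin n → ℝ} :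
    x ∈ TeslerPolytope n a ↔
    (∀ i j : Fin n, j < i → x i j = 0) ∧
    (∀ i j : Fin n, i ≤ j → 0 ≤ x i j) ∧
    (∀ k : Fin n, hook x k = (a k : ℝ)) := Iff.rfl

lemma hook_add (x y : Fin n → Fin n → ℝ) (k : Fin n) :
    hook (fun p q => x p q + y p q) k = hook x k + hook y k := by
  simp [hook, Finset.sum_add_distrib]; ring

/-- elementary matrix -/
def El (r m : Fin n) : Fin n → Fin n → ℝ := fun p q => if p = r ∧ q = m then 1 else 0

lemma hook_El {r m : Fin n} (hrm : r ≤ m) (s : Fin n) :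
    hook (El r m) s = (if s = r then 1 else 0) - (if r < m ∧ s = m then 1 else 0) := by
  unfold hook El
  congr 1
  · by_cases hs : s = r
    · subst hs
      rw [Finset.sum_eq_single m]
      · simp
      · intro j _ hj; simp [hj]
      · intro hm; simp [hrm] at hm
    · rw [Finset.sum_eq_zero]
      · simp [hs]
      · intro j _; simp [hs]
  · by_cases hs : s = m
    · subst hs
      by_cases hr : r < s
      · rw [Finset.sum_eq_single r]
        · simp [hr]
        · intro j _ hj; simp [hj]
        · intro hm; simp [hr] at hm
      · rw [Finset.sum_eq_zero]
        · simp [hr]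
        · intro j hj
          simp only [mem_filter, mem_univ, true_and] at hj
          have : ¬ (j = r) := fun h => hr (h ▸ hj)
          simp [this]
    · rw [Finset.sum_eq_zero]
      · have : ¬(r < m ∧ s = m) := fun h => hs h.2
        simp [this]
      · intro j _; simp [hs]

lemma hook_lin (x w1 w2 : Fin n → Fin n → ℝ) (c : ℝ) (s : Fin n) :
    hook (fun p q => x p q + c * (w1 p q - w2 p q)) s
      = hook x s + c * (hook w1 s - hook w2 s) := by
  unfold hook
  rw [Finset.sum_add_distrib, Finset.sum_add_distrib, ← Finset.mul_sum, ← Finset.mul_sum,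
      Finset.sum_sub_distrib, Finset.sum_sub_distrib]
  ring

/-- In a Tesler matrix, if some row has a positive entry in column `m > r`,
then row `m` has a positive entry (in some column `≥ m`). -/
lemma row_pos_of_col_pos {a : Fin n → ℕ} {x : Fin n → Fin n → ℝ}
    (hx : (∀ i j : Fin n, j < i → x i j = 0) ∧
       (∀ i j : Fin n, i ≤ j → 0 ≤ x i j) ∧
       (∀ k : Fin n, hook x k = (a k : ℝ)))
    {r m : Fin n} (hrm : r < m) (hpos : 0 < x r m) :
    ∃ m', m ≤ m' ∧ 0 < x m m' := by
  obtain ⟨hlow, hnn, hh⟩ := hx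
  have hcol : 0 < ∑ i ∈ univ.filter (fun i => i < m), x i m := by
    apply Finset.sum_pos'
    · intro i hi
      simp only [mem_filter, mem_univ, true_and] at hi
      exact hnn i m hi.le
    · exact ⟨r, by simp [hrm], hpos⟩
  have hrow : 0 < ∑ j ∈ univ.filter (fun j => m ≤ j), x m j := by
    have := hh m
    unfold hook at this
    have : ∑ j ∈ univ.filter (fun j => m ≤ j), x m j
        = (a m : ℝ) + ∑ i ∈ univ.filter (fun i => i < m), x i m := by linarith
    rw [this]
    positivity
  by_contra hcon
  push_neg at hcon
  have : ∑ j ∈ univ.filter (fun j => m ≤ j), x m j ≤ 0 := by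
    apply Finset.sum_nonpos
    intro j hj
    simp only [mem_filter, mem_univ, true_and] at hj
    exact hcon j hj
  linarith

/-- The chain gadget: a nonnegative perturbation supported on positive entries
of `x`, on rows `≥ r`, whose hook sums are the indicator of `r`. -/
lemma chain_exists {a : Fin n → ℕ} {x : Fin n → Fin n → ℝ}
    (hx : (∀ i j : Fin n, j < i → x i j = 0) ∧
       (∀ i j : Fin n, i ≤ j → 0 ≤ x i j) ∧
       (∀ k : Fin n, hook x k = (a k : ℝ))) :
    ∀ t : ℕ, ∀ r : Fin n, n - (r : ℕ) ≤ t → (∃ m, r ≤ m ∧ 0 < x r m) →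
    ∃ v : Fin n → Fin n → ℝ,
      (∀ p q, 0 ≤ v p q ∧ v p q ≤ 1) ∧
      (∀ p q, v p q ≠ 0 → r ≤ p ∧ 0 < x p q) ∧
      (∀ s, hook v s = if s = r then 1 else 0) := by
  intro t
  induction t with
  | zero => intro r hr; exact absurd hr (by have := r.isLt; omega)
  | succ t ih =>
    intro r hr ⟨m, hrm, hpos⟩
    by_cases hmr : m = r
    · subst hmr
      refine ⟨El m m, ?_, ?_, ?_⟩
      · intro p q; unfold El; split <;> norm_num
      · intro p q hne
        unfold El at hne
        split at hne
        · rename_i h; exact ⟨h.1.ge, h.1 ▸ h.2 ▸ hpos⟩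
        · exact absurd rfl hne
      · intro s
        rw [hook_El le_rfl s]
        simp [lt_irrefl]
    · have hlt : r < m := lt_of_le_of_ne hrm (Ne.symm hmr)
      obtain ⟨v', hv1, hv2, hv3⟩ := ih m (by omega) (row_pos_of_col_pos hx hlt hpos)
      refine ⟨fun p q => El r m p q + v' p q, ?_, ?_, ?_⟩
      · intro p q
        show 0 ≤ El r m p q + v' p q ∧ El r m p q + v' p q ≤ 1
        by_cases hp : p = r
        · have h0 : v' p q = 0 := by
            by_contra hne
            have h1 := (hv2 p q hne).1
            rw [hp] at h1
            exact absurd (lt_of_lt_of_le hlt h1) (lt_irrefl r)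
          rw [h0, add_zero]
          unfold El; split <;> norm_num
        · have h0 : El r m p q = 0 := by
            simp only [El]
            rw [if_neg]
            intro h; exact hp h.1
          rw [h0, zero_add]
          exact hv1 p q
      · intro p q hne
        have hne : El r m p q + v' p q ≠ 0 := hne
        by_cases hpq : p = r ∧ q = m
        · exact ⟨hpq.1.ge, hpq.1 ▸ hpq.2 ▸ hpos⟩
        · have hEl : El r m p q = 0 := by simp only [El]; rw [if_neg hpq]
          have hv'ne : v' p q ≠ 0 := by
            intro h0
            rw [hEl, h0, add_zero] at hne
            exact hne rfl
          obtain ⟨h1, h2⟩ := hv2 p q hv'ne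
          exact ⟨(hlt.le.trans h1), h2⟩
      · intro s
        rw [hook_add (El r m) v' s, hook_El hrm s, hv3 s]
        have hrm' : ¬ r = m := fun h => hmr h.symm
        by_cases hsr : s = r <;> by_cases hsm : s = m
        · exact absurd (hsr ▸ hsm : r = m) hrm'
        · simp [hsr, hsm, hrm']
        · simp [hsr, hsm, hlt, hrm']
        · simp [hsr, hsm]

/-- chain with a forced first step: row `k` support concentrated at column `m`. -/
lemma step_exists {a : Fin n → ℕ} {x : Fin n → Fin n → ℝ}
    (hx : (∀ i j : Fin n, j < i → x i j = 0) ∧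
       (∀ i j : Fin n, i ≤ j → 0 ≤ x i j) ∧
       (∀ k : Fin n, hook x k = (a k : ℝ)))
    {k m : Fin n} (hkm : k ≤ m) (hpos : 0 < x k m) :
    ∃ w : Fin n → Fin n → ℝ,
      (∀ p q, 0 ≤ w p q ∧ w p q ≤ 1) ∧
      (∀ p q, w p q ≠ 0 → 0 < x p q) ∧
      (∀ q, q ≠ m → w k q = 0) ∧ (w k m = 1) ∧
      (∀ s, hook w s = if s = k then 1 else 0) := by
  by_cases hmk : m = k
  · subst hmk
    refine ⟨El m m, ?_, ?_, ?_, ?_, ?_⟩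
    · intro p q; unfold El; split <;> norm_num
    · intro p q hne
      unfold El at hne
      split at hne
      · rename_i h; exact h.1 ▸ h.2 ▸ hpos
      · exact absurd rfl hne
    · intro q hq; unfold El; rw [if_neg (fun h => hq h.2)]
    · unfold El; simp
    · intro s; rw [hook_El le_rfl s]; simp [lt_irrefl]
  · have hlt : k < m := lt_of_le_of_ne hkm (Ne.symm hmk)
    have hprem : ∃ m', m ≤ m' ∧ 0 < x m m' := by
      -- row m has positive entry
      obtain ⟨hlow, hnn, hh⟩ := hx
      have hcol : 0 < ∑ i ∈ univ.filter (fun i => i < m), x i m :=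
        Finset.sum_pos' (fun i hi => hnn i m (by simpa using (mem_filter.mp hi).2.le))
          ⟨k, by simp [hlt], hpos⟩
      have hrow : 0 < ∑ j ∈ univ.filter (fun j => m ≤ j), x m j := by
        have h1 := hh m
        unfold hook at h1
        have h2 : ∑ j ∈ univ.filter (fun j => m ≤ j), x m j
            = (a m : ℝ) + ∑ i ∈ univ.filter (fun i => i < m), x i m := by linarith
        rw [h2]; positivity
      by_contra hcon
      push_neg at hcon
      have : ∑ j ∈ univ.filter (fun j => m ≤ j), x m j ≤ 0 :=
        Finset.sum_nonpos (fun j hj => hcon j (by simpa using (mem_filter.mp hj).2))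
      linarith
    obtain ⟨v, hv1, hv2, hv3⟩ := chain_exists hx n m (by omega) hprem
    have hvk : ∀ q, v k q = 0 := by
      intro q
      by_contra hne
      exact absurd (lt_of_lt_of_le hlt (hv2 k q hne).1) (lt_irrefl k)
    refine ⟨fun p q => El k m p q + v p q, ?_, ?_, ?_, ?_, ?_⟩
    · intro p q
      show 0 ≤ El k m p q + v p q ∧ El k m p q + v p q ≤ 1
      by_cases hp : p = k
      · subst hp; rw [hvk q, add_zero]; unfold El; split <;> norm_num
      · have h0 : El k m p q = 0 := by
          unfold El; rw [if_neg (fun h => hp h.1)]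
        rw [h0, zero_add]; exact hv1 p q
    · intro p q hne
      have hne : El k m p q + v p q ≠ 0 := hne
      by_cases hpq : p = k ∧ q = m
      · exact hpq.1 ▸ hpq.2 ▸ hpos
      · have hEl : El k m p q = 0 := by unfold El; rw [if_neg hpq]
        have : v p q ≠ 0 := fun h0 => hne (by rw [hEl, h0, add_zero])
        exact (hv2 p q this).2
    · intro q hq
      show El k m k q + v k q = 0
      rw [hvk q, add_zero]
      unfold El; rw [if_neg (fun h => hq h.2)]
    · show El k m k m + v k m = 1
      rw [hvk m, add_zero]; unfold El; simp
    · intro s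
      rw [hook_add (El k m) v s, hook_El hkm s, hv3 s]
      have hkm' : ¬ k = m := fun h => hmk h.symm
      by_cases hsk : s = k <;> by_cases hsm : s = m
      · exact absurd (hsk ▸ hsm : k = m) hkm'
      · simp [hsk, hsm, hkm']
      · simp [hsk, hsm, hlt, hkm']
      · simp [hsk, hsm]

/-- An extreme point of the Tesler polytope has at most one nonzero entry per row. -/
lemma extreme_one_per_row {a : Fin n → ℕ} {x : Fin n → Fin n → ℝ}
    (hex : x ∈ Set.extremePoints ℝ (TeslerPolytope n a)) :
    ∀ k i j : Fin n, x k i ≠ 0 → x k j ≠ 0 → i = j := by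
  rintro k i j hi hj
  by_contra hij
  -- wlog i < j
  wlog hlt : i < j generalizing i j
  · exact this j i hj hi (Ne.symm hij) (lt_of_le_of_ne (not_lt.mp hlt) (Ne.symm hij))
  obtain ⟨hxmem, hxext⟩ := hex
  obtain ⟨hlow, hnn, hh⟩ := (mem_tesler_iff).mp hxmem
  have hki : k ≤ i := by
    by_contra h
    exact hi (hlow k i (not_le.mp h))
  have hkj : k ≤ j := hki.trans hlt.le
  have hposi : 0 < x k i := lt_of_le_of_ne (hnn k i hki) (Ne.symm hi)
  have hposj : 0 < x k j := lt_of_le_of_ne (hnn k j hkj) (Ne.symm hj)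
  obtain ⟨w1, hw11, hw12, hw13, hw14, hw15⟩ := step_exists ⟨hlow, hnn, hh⟩ hki hposi
  obtain ⟨w2, hw21, hw22, hw23, hw24, hw25⟩ := step_exists ⟨hlow, hnn, hh⟩ hkj hposj
  -- choose ε
  set T : Finset (Fin n × Fin n) := univ.filter (fun pq => 0 < x pq.1 pq.2) with hT
  have hTne : T.Nonempty := ⟨(k, i), by simp [hT, hposi]⟩
  set ε : ℝ := T.inf' hTne (fun pq => x pq.1 pq.2) with hε
  have hε0 : 0 < ε := by
    rw [hε, Finset.lt_inf'_iff]
    intro pq hpq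
    simpa [hT] using (mem_filter.mp hpq).2
  have hεle : ∀ p q : Fin n, 0 < x p q → ε ≤ x p q := by
    intro p q h
    exact Finset.inf'_le (fun pq : Fin n × Fin n => x pq.1 pq.2) (Finset.mem_filter.mpr ⟨Finset.mem_univ ((p,q) : Fin n × Fin n), h⟩)
  -- the two perturbations
  set y : Fin n → Fin n → ℝ := fun p q => x p q + ε * (w1 p q - w2 p q) with hy
  set z : Fin n → Fin n → ℝ := fun p q => x p q + (-ε) * (w1 p q - w2 p q) with hz
  have key : ∀ (c : ℝ), |c| ≤ ε →
      (fun p q => x p q + c * (w1 p q - w2 p q)) ∈ TeslerPolytope n a := by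
    intro c hc
    rw [mem_tesler_iff]
    refine ⟨?_, ?_, ?_⟩
    · intro p q hqp
      have hx0 : x p q = 0 := hlow p q hqp
      have h1 : w1 p q = 0 := by
        by_contra h; exact absurd (hx0 ▸ hw12 p q h) (lt_irrefl 0)
      have h2 : w2 p q = 0 := by
        by_contra h; exact absurd (hx0 ▸ hw22 p q h) (lt_irrefl 0)
      simp [hx0, h1, h2]
    · intro p q hpq
      show 0 ≤ x p q + c * (w1 p q - w2 p q)
      rcases le_or_gt (x p q) 0 with hle | hpos
      · have hx0 : x p q = 0 := le_antisymm hle (hnn p q hpq)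
        have h1 : w1 p q = 0 := by
          by_contra h; exact absurd (hx0 ▸ hw12 p q h) (lt_irrefl 0)
        have h2 : w2 p q = 0 := by
          by_contra h; exact absurd (hx0 ▸ hw22 p q h) (lt_irrefl 0)
        simp [hx0, h1, h2]
      · have h1 := hw11 p q
        have h2 := hw21 p q
        have hεx := hεle p q hpos
        have : |c * (w1 p q - w2 p q)| ≤ ε := by
          rw [abs_mul]
          calc |c| * |w1 p q - w2 p q| ≤ ε * 1 := by
                apply mul_le_mul hc ?_ (abs_nonneg _) hε0.le
                rw [abs_le]; constructor <;> nlinarith [h1.1, h1.2, h2.1, h2.2]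
            _ = ε := mul_one ε
        have := abs_le.mp this
        linarith [this.1]
    · intro s
      rw [hook_lin, hw15 s, hw25 s, hh s]
      simp
  have hymem : y ∈ TeslerPolytope n a := key ε (by rw [abs_of_pos hε0])
  have hzmem : z ∈ TeslerPolytope n a := key (-ε) (by rw [abs_neg, abs_of_pos hε0])
  have hseg : x ∈ openSegment ℝ y z := by
    refine ⟨1/2, 1/2, by norm_num, by norm_num, by norm_num, ?_⟩
    funext p
    funext q
    show (1/2 : ℝ) * y p q + (1/2 : ℝ) * z p q = x p q
    simp only [hy, hz]
    ring
  have := hxext hymem hzmem hseg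
  have hcon : y k i = x k i := congrFun (congrFun this k) i
  have hw2ki : w2 k i = 0 := hw23 i (Fin.ne_of_lt hlt)
  rw [hy] at hcon
  simp only [hw14, hw2ki] at hcon
  nlinarith [hcon]

/-- recursively-defined entries of the candidate vertex attached to `f`. -/
noncomputable def tb (a : Fin n → ℕ) (f : Fin n → Fin n) : Fin n → ℝ :=
  fun k => (a k : ℝ) +
    ∑ i ∈ (univ.filter (fun i : Fin n => i < k ∧ f i = k)).attach, tb a f i
termination_by k => (k : ℕ)
decreasing_by exact (Finset.mem_filter.mp i.2).2.1

lemma tb_eq (a : Fin n → ℕ) (f : Fin n → Fin n) (k : Fin n) :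
    tb a f k = (a k : ℝ) + ∑ i ∈ univ.filter (fun i : Fin n => i < k ∧ f i = k), tb a f i := by
  rw [tb]
  congr 1
  exact Finset.sum_attach _ _

lemma tb_nonneg (a : Fin n → ℕ) (f : Fin n → Fin n) (k : Fin n) :
    (a k : ℝ) ≤ tb a f k := by
  rw [tb_eq]
  have : 0 ≤ ∑ i ∈ univ.filter (fun i : Fin n => i < k ∧ f i = k), tb a f i := by
    apply Finset.sum_nonneg
    intro i hi
    have : (a i : ℝ) ≤ tb a f i := tb_nonneg a f i
    have h0 : (0:ℝ) ≤ (a i : ℝ) := Nat.cast_nonneg _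
    linarith
  linarith
termination_by (k : ℕ)
decreasing_by exact (Finset.mem_filter.mp hi).2.1

lemma tb_congr (a : Fin n → ℕ) (f g : Fin n → Fin n) (k : Fin n)
    (h : ∀ i : Fin n, i < k → f i = g i) : tb a f k = tb a g k := by
  rw [tb_eq, tb_eq]
  congr 1
  have hset : univ.filter (fun i : Fin n => i < k ∧ f i = k)
      = univ.filter (fun i : Fin n => i < k ∧ g i = k) := by
    apply Finset.filter_congr
    intro i _
    constructor
    · rintro ⟨h1, h2⟩; exact ⟨h1, (h i h1) ▸ h2⟩
    · rintro ⟨h1, h2⟩; exact ⟨h1, (h i h1) ▸ h2⟩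
  rw [hset]
  apply Finset.sum_congr rfl
  intro i hi
  have hik : i < k := (Finset.mem_filter.mp hi).2.1
  exact tb_congr a f g i (fun j hj => h j (hj.trans hik))
termination_by (k : ℕ)
decreasing_by exact hik

/-- the candidate vertex attached to `f`. -/
noncomputable def teslerOf (a : Fin n → ℕ) (f : Fin n → Fin n) : Fin n → Fin n → ℝ :=
  fun p q => if q = f p then tb a f p else 0

lemma teslerOf_mem (a : Fin n → ℕ) {f : Fin n → Fin n} (hf : ∀ k, k ≤ f k) :
    teslerOf a f ∈ TeslerPolytope n a := by
  rw [mem_tesler_iff]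
  refine ⟨?_, ?_, ?_⟩
  · intro p q hqp
    unfold teslerOf
    rw [if_neg]
    intro h
    exact absurd ((h ▸ hqp).trans_le (hf p)) (lt_irrefl _)
  · intro p q _
    unfold teslerOf
    split
    · have := tb_nonneg a f p; have : (0:ℝ) ≤ (a p : ℝ) := Nat.cast_nonneg _
      have := tb_nonneg a f p; linarith
    · exact le_refl 0
  · intro k
    show hook (teslerOf a f) k = (a k : ℝ)
    unfold hook
    have hrow : ∑ j ∈ univ.filter (fun j => k ≤ j), teslerOf a f k j = tb a f k := by
      rw [Finset.sum_eq_single (f k)]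
      · unfold teslerOf; simp
      · intro j _ hj; unfold teslerOf; rw [if_neg hj]
      · intro hm; exact absurd (Finset.mem_filter.mpr ⟨Finset.mem_univ _, hf k⟩) hm
    have hcol : ∑ i ∈ univ.filter (fun i => i < k), teslerOf a f i k
        = ∑ i ∈ univ.filter (fun i : Fin n => i < k ∧ f i = k), tb a f i := by
      rw [Finset.sum_filter, Finset.sum_filter]
      apply Finset.sum_congr rfl
      intro i _
      unfold teslerOf
      by_cases h1 : i < k <;> by_cases h2 : f i = k
      · simp [h1, h2]
      · have : ¬ (k = f i) := fun h => h2 h.symm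
        simp [h1, h2, this]
      · simp [h1, h2]
      · simp [h1, h2]
    rw [hrow, hcol, tb_eq]
    ring

/-- two Tesler matrices with support inside the graph of the same `f` agree. -/
lemma support_unique {a : Fin n → ℕ} {x y : Fin n → Fin n → ℝ}
    (hx : x ∈ TeslerPolytope n a) (hy : y ∈ TeslerPolytope n a) (f : Fin n → Fin n)
    (hxs : ∀ p q, q ≠ f p → x p q = 0) (hys : ∀ p q, q ≠ f p → y p q = 0) : x = y := by
  obtain ⟨hxl, hxn, hxh⟩ := mem_tesler_iff.mp hx
  obtain ⟨hyl, hyn, hyh⟩ := mem_tesler_iff.mp hy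
  have main : ∀ t : ℕ, ∀ p : Fin n, (p : ℕ) < t → ∀ q, x p q = y p q := by
    intro t
    induction t with
    | zero => intro p hp; exact absurd hp (Nat.not_lt_zero _)
    | succ t ih =>
      intro p hp q
      by_cases hq : q = f p
      · subst hq
        by_cases hfp : f p < p
        · rw [hxl p (f p) hfp, hyl p (f p) hfp]
        · have hpf : p ≤ f p := not_lt.mp hfp
          have hcol : ∑ i ∈ univ.filter (fun i => i < p), x i p
              = ∑ i ∈ univ.filter (fun i => i < p), y i p := by
            apply Finset.sum_congr rfl
            intro i hi
            have hip : i < p := (Finset.mem_filter.mp hi).2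
            exact ih i (by omega) p
          have hrowx : ∑ j ∈ univ.filter (fun j => p ≤ j), x p j = x p (f p) := by
            rw [Finset.sum_eq_single (f p)]
            · intro j _ hj; exact hxs p j hj
            · intro hm; exact absurd (Finset.mem_filter.mpr ⟨Finset.mem_univ _, hpf⟩) hm
          have hrowy : ∑ j ∈ univ.filter (fun j => p ≤ j), y p j = y p (f p) := by
            rw [Finset.sum_eq_single (f p)]
            · intro j _ hj; exact hys p j hj
            · intro hm; exact absurd (Finset.mem_filter.mpr ⟨Finset.mem_univ _, hpf⟩) hm
          have h1 := hxh p
          have h2 := hyh p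
          unfold hook at h1 h2
          rw [hrowx] at h1
          rw [hrowy] at h2
          rw [hcol] at h1
          linarith
      · rw [hxs p q hq, hys p q hq]
  funext p q
  exact main n p p.isLt q


lemma teslerOf_def (a : Fin n → ℕ) (f : Fin n → Fin n) (p q : Fin n) :
    teslerOf a f p q = if q = f p then tb a f p else 0 := rfl

/-- A point of the Tesler polytope with at most one nonzero entry per row is extreme. -/
lemma one_per_row_extreme {a : Fin n → ℕ} {x : Fin n → Fin n → ℝ}
    (hx : x ∈ TeslerPolytope n a)
    (h1 : ∀ k i j : Fin n, x k i ≠ 0 → x k j ≠ 0 → i = j) :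
    x ∈ Set.extremePoints ℝ (TeslerPolytope n a) := by
  classical
  refine ⟨hx, ?_⟩
  intro y hy z hz hseg
  obtain ⟨t, u, ht, hu, htu, hsum⟩ := hseg
  obtain ⟨hyl, hyn, _⟩ := mem_tesler_iff.mp hy
  obtain ⟨hzl, hzn, _⟩ := mem_tesler_iff.mp hz
  have hpt : ∀ p q : Fin n, t * y p q + u * z p q = x p q := by
    intro p q
    have := congrFun (congrFun hsum p) q
    simpa [Pi.add_apply, Pi.smul_apply, smul_eq_mul] using this
  have hzero : ∀ p q : Fin n, x p q = 0 → y p q = 0 ∧ z p q = 0 := by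
    intro p q h0
    rcases lt_or_ge q p with hqp | hpq
    · exact ⟨hyl p q hqp, hzl p q hqp⟩
    · have hy0 := hyn p q hpq
      have hz0 := hzn p q hpq
      have := hpt p q
      constructor <;> nlinarith
  set f : Fin n → Fin n := fun p => if h : ∃ q, x p q ≠ 0 then h.choose else p with hf
  have hxs : ∀ p q, q ≠ f p → x p q = 0 := by
    intro p q hq
    by_cases h : ∃ q, x p q ≠ 0
    · by_contra hne
      apply hq
      rw [hf]
      simp only [dif_pos h]
      exact h1 p q h.choose hne h.choose_spec
    · push_neg at h
      exact h q
  have hys : ∀ p q, q ≠ f p → y p q = 0 := fun p q hq => (hzero p q (hxs p q hq)).1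
  have hzs : ∀ p q, q ≠ f p → z p q = 0 := fun p q hq => (hzero p q (hxs p q hq)).2
  have hyz : y = z := support_unique hy hz f hys hzs
  have hyx : y = x := by
    funext p q
    have := hpt p q
    rw [← hyz] at this
    have h2 : (t + u) * y p q = x p q := by rw [← this]; ring
    rw [htu, one_mul] at h2
    exact h2
  exact hyx

/-- The extreme points are exactly the matrices `teslerOf a f`. -/
lemma extremePoints_eq (a : Fin n → ℕ) :
    Set.extremePoints ℝ (TeslerPolytope n a)
      = teslerOf a '' {f : Fin n → Fin n | ∀ k, k ≤ f k} := by
  classical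
  apply Set.Subset.antisymm
  · intro x hex
    have hx := hex.1
    obtain ⟨hxl, hxn, hxh⟩ := mem_tesler_iff.mp hx
    have h1 := extreme_one_per_row hex
    set f : Fin n → Fin n := fun p => if h : ∃ q, x p q ≠ 0 then h.choose else p with hf
    have hxs : ∀ p q, q ≠ f p → x p q = 0 := by
      intro p q hq
      by_cases h : ∃ q, x p q ≠ 0
      · by_contra hne
        apply hq
        rw [hf]
        simp only [dif_pos h]
        exact h1 p q h.choose hne h.choose_spec
      · push_neg at h
        exact h q
    have hfk : ∀ k, k ≤ f k := by
      intro k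
      rw [hf]
      by_cases h : ∃ q, x k q ≠ 0
      · simp only [dif_pos h]
        by_contra hc
        exact h.choose_spec (hxl k h.choose (not_le.mp hc))
      · simp only [dif_neg h]
        exact le_rfl
    exact ⟨f, hfk, (support_unique hx (teslerOf_mem a hfk) f hxs
      (fun p q hq => by rw [teslerOf_def, if_neg hq])).symm⟩
  · rintro x ⟨f, hf, rfl⟩
    apply one_per_row_extreme (teslerOf_mem a hf)
    intro k i j hi hj
    have h1 : i = f k := by
      by_contra h
      rw [teslerOf_def, if_neg h] at hi
      exact hi rfl
    have h2 : j = f k := by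
      by_contra h
      rw [teslerOf_def, if_neg h] at hj
      exact hj rfl
    rw [h1, h2]

lemma injOn_teslerOf (hn : 0 < n) (a : Fin n → ℕ) (ha : 0 < a ⟨0, hn⟩)
    (hpos : ∀ i : Fin n, 1 ≤ (i : ℕ) → (i : ℕ) + 1 < n → 0 < a i) :
    Set.InjOn (teslerOf a) {f : Fin n → Fin n | ∀ k, k ≤ f k} := by
  intro f hf g hg heq
  have main : ∀ t : ℕ, ∀ k : Fin n, (k : ℕ) < t → f k = g k := by
    intro t
    induction t with
    | zero => intro k h; exact absurd h (Nat.not_lt_zero _)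
    | succ t ih =>
      intro k hk
      by_cases hlast : (k : ℕ) + 1 < n
      · have htb : tb a f k = tb a g k := by
          apply tb_congr
          intro i hi
          exact ih i (by have := Fin.lt_def.mp hi; omega)
        have hak : 0 < a k := by
          rcases Nat.eq_zero_or_pos (k : ℕ) with h0 | h1
          · have : k = ⟨0, hn⟩ := Fin.ext h0
            rw [this]; exact ha
          · exact hpos k h1 hlast
        have htbpos : (0 : ℝ) < tb a f k :=
          lt_of_lt_of_le (by exact_mod_cast hak) (tb_nonneg a f k)
        have h2 := congrFun (congrFun heq k) (f k)
        have h1 : teslerOf a f k (f k) = tb a f k := by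
          unfold teslerOf; rw [if_pos rfl]
        by_contra hne
        have h3 : teslerOf a g k (f k) = 0 := by
          unfold teslerOf; rw [if_neg hne]
        rw [h1, h3] at h2
        exact absurd h2 (ne_of_gt htbpos)
      · have hfk : f k = k := by
          have := hf k
          have h4 := (f k).isLt
          have h5 := Fin.le_def.mp (hf k)
          exact Fin.ext (by omega)
        have hgk : g k = k := by
          have h4 := (g k).isLt
          have h5 := Fin.le_def.mp (hg k)
          exact Fin.ext (by omega)
        rw [hfk, hgk]
  funext k
  exact main n k k.isLt

lemma not_inj_teslerOf (a : Fin n → ℕ) (i : Fin n) (hi1 : 1 ≤ (i : ℕ))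
    (hi2 : (i : ℕ) + 1 < n) (hai : a i = 0) :
    ∃ f g : Fin n → Fin n, (∀ k, k ≤ f k) ∧ (∀ k, k ≤ g k) ∧ f ≠ g ∧
      teslerOf a f = teslerOf a g := by
  classical
  set j : Fin n := ⟨(i : ℕ) + 1, hi2⟩ with hj
  set f : Fin n → Fin n := fun m => m with hfdef
  set g : Fin n → Fin n := fun m => if m = i then j else m with hgdef
  have hij : i ≠ j := by
    intro h
    have := congrArg Fin.val h
    simp [hj] at this
  have htbf : ∀ k, tb a f k = (a k : ℝ) := by
    intro k
    rw [tb_eq]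
    have : univ.filter (fun m : Fin n => m < k ∧ f m = k) = ∅ := by
      ext m
      simp only [Finset.mem_filter, Finset.mem_univ, true_and, Finset.notMem_empty,
        iff_false]
      rintro ⟨h1, h2⟩
      exact absurd (h2 ▸ h1) (lt_irrefl k)
    rw [this, Finset.sum_empty, add_zero]
  have hgfi : tb a g i = 0 := by
    rw [tb_eq]
    have : univ.filter (fun m : Fin n => m < i ∧ g m = i) = ∅ := by
      ext m
      simp only [Finset.mem_filter, Finset.mem_univ, true_and, Finset.notMem_empty,
        iff_false]
      rintro ⟨h1, h2⟩
      by_cases hmi : m = i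
      · exact absurd h1 (hmi ▸ lt_irrefl i)
      · rw [hgdef] at h2
        simp only [if_neg hmi] at h2
        exact absurd (h2 ▸ h1) (lt_irrefl i)
    rw [this, Finset.sum_empty, add_zero, hai, Nat.cast_zero]
  have htbg : ∀ k, tb a g k = (a k : ℝ) := by
    intro k
    by_cases hk : k = j
    · rw [tb_eq]
      have : univ.filter (fun m : Fin n => m < k ∧ g m = k) = {i} := by
        ext m
        simp only [Finset.mem_filter, Finset.mem_univ, true_and, Finset.mem_singleton]
        constructor
        · rintro ⟨h1, h2⟩
          by_cases hmi : m = i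
          · exact hmi
          · rw [hgdef] at h2
            simp only [if_neg hmi] at h2
            exact absurd (h2 ▸ h1) (lt_irrefl k)
        · rintro rfl
          refine ⟨?_, ?_⟩
          · rw [hk]; exact Fin.lt_def.mpr (by simp [hj])
          · rw [hgdef]; simp only [if_pos rfl]; exact hk.symm
      rw [this, Finset.sum_singleton, hgfi, add_zero]
    · rw [tb_eq]
      have : univ.filter (fun m : Fin n => m < k ∧ g m = k) = ∅ := by
        ext m
        simp only [Finset.mem_filter, Finset.mem_univ, true_and, Finset.notMem_empty,
          iff_false]
        rintro ⟨h1, h2⟩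
        by_cases hmi : m = i
        · rw [hgdef] at h2
          simp only [if_pos hmi] at h2
          exact hk h2.symm
        · rw [hgdef] at h2
          simp only [if_neg hmi] at h2
          exact absurd (h2 ▸ h1) (lt_irrefl k)
      rw [this, Finset.sum_empty, add_zero]
  refine ⟨f, g, fun k => le_refl k, ?_, ?_, ?_⟩
  · intro k
    rw [hgdef]
    by_cases hk : k = i
    · simp only [if_pos hk]
      rw [hk]
      exact Fin.le_def.mpr (by simp [hj])
    · simp only [if_neg hk]
      exact le_rfl
  · intro h
    have := congrFun h i
    rw [hfdef, hgdef] at this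
    simp only [if_pos rfl] at this
    exact hij this
  · funext p q
    unfold teslerOf
    rw [htbf p, htbg p]
    by_cases hpi : p = i
    · subst hpi
      rw [hai, Nat.cast_zero]
      split <;> split <;> rfl
    · have : g p = p := by rw [hgdef]; simp only [if_neg hpi]
      rw [this]

/-- cardinality of `{f : Fin n → Fin n | ∀ k, k ≤ f k}` is `n!`. -/
lemma card_above (n : ℕ) :
    ({f : Fin n → Fin n | ∀ k, k ≤ f k}).ncard = n.factorial := by
  classical
  have h1 : ({f : Fin n → Fin n | ∀ k, k ≤ f k}) =
      ↑(univ.filter (fun f : Fin n → Fin n => ∀ k, k ≤ f k)) := by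
    ext f; simp
  rw [h1, Set.ncard_coe_finset, ← Fintype.card_subtype]
  have e : {f : Fin n → Fin n // ∀ k, k ≤ f k} ≃ (∀ k : Fin n, {j : Fin n // k ≤ j}) :=
    { toFun := fun f k => ⟨f.1 k, f.2 k⟩
      invFun := fun g => ⟨fun k => (g k).1, fun k => (g k).2⟩
      left_inv := fun f => rfl
      right_inv := fun g => rfl }
  rw [Fintype.card_congr e, Fintype.card_pi]
  have hcard : ∀ k : Fin n, Fintype.card {j : Fin n // k ≤ j} = n - k := by
    intro k
    rw [Fintype.card_subtype]
    have : univ.filter (fun j : Fin n => k ≤ j) = Finset.Ici k := by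
      ext j; simp
    rw [this, Fin.card_Ici]
  calc (∏ k : Fin n, Fintype.card {j : Fin n // k ≤ j})
      = ∏ k : Fin n, (n - (k : ℕ)) := by
        exact Finset.prod_congr rfl (fun k _ => hcard k)
    _ = ∏ i ∈ range n, (n - i) := by rw [Fin.prod_univ_eq_prod_range]
    _ = ∏ i ∈ range n, (i + 1) := by
        rw [← Finset.prod_range_reflect]
        apply Finset.prod_congr rfl
        intro i hi
        have := Finset.mem_range.mp hi
        omega
    _ = n.factorial := Finset.prod_range_add_one_eq_factorial n


end TesAux

open TesAux in

/-- If `a₁ > 0`, the Tesler polytope `Tes_n(a)` has at most `n!` vertices (extreme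
points), with equality if and only if `a₂, …, a_{n-1}` are all positive.
(In `0`-based indexing, `a₂, …, a_{n-1}` are the `a i` with `1 ≤ i` and `i + 1 < n`.) -/
theorem teslerPolytope_vertex_count (n : ℕ) (hn : 0 < n) (a : Fin n → ℕ)
    (ha : 0 < a ⟨0, hn⟩) :
    (Set.extremePoints ℝ (TeslerPolytope n a)).ncard ≤ n.factorial ∧
    ((Set.extremePoints ℝ (TeslerPolytope n a)).ncard = n.factorial ↔
      ∀ i : Fin n, 1 ≤ (i : ℕ) → (i : ℕ) + 1 < n → 0 < a i) := by
  classical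
  set S : Set (Fin n → Fin n) := {f : Fin n → Fin n | ∀ k, k ≤ f k} with hS
  have hSfin : S.Finite := Set.toFinite S
  have hE : Set.extremePoints ℝ (TeslerPolytope n a) = teslerOf a '' S :=
    extremePoints_eq a
  have hbound : (Set.extremePoints ℝ (TeslerPolytope n a)).ncard ≤ n.factorial := by
    rw [hE]
    calc (teslerOf a '' S).ncard ≤ S.ncard := Set.ncard_image_le hSfin
      _ = n.factorial := card_above n
  refine ⟨hbound, ?_, ?_⟩
  · intro hcard i hi1 hi2
    by_contra hai
    have hai0 : a i = 0 := Nat.eq_zero_of_not_pos hai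
    obtain ⟨f, g, hfS, hgS, hfg, heq⟩ := not_inj_teslerOf a i hi1 hi2 hai0
    have hfmem : f ∈ S := hfS
    have hgmem : g ∈ S := hgS
    have him : teslerOf a '' S = teslerOf a '' (S \ {f}) := by
      apply Set.Subset.antisymm
      · rintro x ⟨h, hh, rfl⟩
        by_cases hhf : h = f
        · exact ⟨g, ⟨hgmem, fun hgf => hfg ((Set.mem_singleton_iff.mp hgf) ▸ rfl)⟩,
            by rw [hhf, heq]⟩
        · exact ⟨h, ⟨hh, hhf⟩, rfl⟩
      · rintro x ⟨h, hh, rfl⟩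
        exact ⟨h, hh.1, rfl⟩
    have hlt : (Set.extremePoints ℝ (TeslerPolytope n a)).ncard < n.factorial := by
      rw [hE, him]
      calc (teslerOf a '' (S \ {f})).ncard ≤ (S \ {f}).ncard :=
            Set.ncard_image_le (hSfin.subset Set.diff_subset)
        _ < S.ncard := Set.ncard_diff_singleton_lt_of_mem hfmem hSfin
        _ = n.factorial := card_above n
    omega
  · intro hpos
    rw [hE, Set.ncard_image_of_injOn (injOn_teslerOf hn a ha hpos)]
    exact card_above n
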